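/- For any real constants a and A, the function G : ℝ → ℝ defined by G(x) = a(e^{Ax} + e^{−Ax} + 1) is differentiable and satisfies the functional equation (FE). -/
import Mathlib


open Real

/-- A function `G : ℝ → ℝ` satisfies the functional equation (FE) if it is
differentiable and for all `x, y, z` with `x + y + z = 0`,
`G'(x)(G(y)+G(z)) + G'(y)(G(z)+G(x)) + G'(z)(G(x)+G(y)) = 0`. -/
def FE (G : ℝ → ℝ) : Prop :=
  Differentiable ℝ G ∧ ∀ x y z : ℝ, x + y + z = 0 →
    deriv G x * (G y + G z) + deriv G y * (G z + G x) + deriv G z * (G x + G y) = 0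

theorem stmt8 (a A : ℝ) :
    FE (fun x : ℝ => a * (Real.exp (A * x) + Real.exp (-A * x) + 1)) := by
  have hd : ∀ x : ℝ, HasDerivAt (fun x : ℝ => a * (Real.exp (A * x) + Real.exp (-A * x) + 1))
      (a * (A * Real.exp (A * x) + (-A) * Real.exp (-A * x))) x := by
    intro x
    have h1 : HasDerivAt (fun x : ℝ => Real.exp (A * x)) (A * Real.exp (A * x)) x := by
      simpa [mul_comm] using ((hasDerivAt_id x).const_mul A).exp
    have h2 : HasDerivAt (fun x : ℝ => Real.exp (-A * x)) ((-A) * Real.exp (-A * x)) x := by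
      simpa [mul_comm] using ((hasDerivAt_id x).const_mul (-A)).exp
    simpa using ((h1.add h2).add_const 1).const_mul a
  constructor
  · intro x; exact (hd x).differentiableAt
  · intro x y z hxyz
    have hz : z = -x - y := by linarith
    subst hz
    simp only [(hd _).deriv]
    have e1 : Real.exp (A * (-x - y)) = (Real.exp (A * x) * Real.exp (A * y))⁻¹ := by
      rw [← Real.exp_add, ← Real.exp_neg]; ring_nf
    have e2 : Real.exp (-A * (-x - y)) = Real.exp (A * x) * Real.exp (A * y) := by
      rw [← Real.exp_add]; ring_nf
    have e3 : Real.exp (-A * x) = (Real.exp (A * x))⁻¹ := by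
      rw [← Real.exp_neg]; ring_nf
    have e4 : Real.exp (-A * y) = (Real.exp (A * y))⁻¹ := by
      rw [← Real.exp_neg]; ring_nf
    rw [e1, e2, e3, e4]
    have hx : Real.exp (A * x) ≠ 0 := Real.exp_ne_zero _
    have hy : Real.exp (A * y) ≠ 0 := Real.exp_ne_zero _
    field_simp
    ring
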